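/- Let q = p^r > 3 with p an odd prime, let t(x) = x + ∑_{k=0}^{q-2} x^k ∈ F_q[x], and define recursively f_1 = x_1 and f_i(x_1,…,x_i) as the reduced form of t(f_{i-1}^{q-2} + x_i^{q-2}) for i ≥ 2. Then f_4(x_1,x_2,x_3,x_4) has total degree 4(q-2). -/

import Mathlib

open Finset

namespace LPP4

variable {F : Type*} [Field F] [Fintype F] [DecidableEq F]
set_option linter.unusedSectionVars false

/-- The function swapping 0 and 1. -/
def sw (a : F) : F := if a = 0 then 1 else if a = 1 then 0 else a

/-- `Wf y = y/(y-1)` with `Wf 0 = 1`, `Wf 1 = 0`. -/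
def Wf (a : F) : F := (1 - a⁻¹)⁻¹

lemma sw_invol (a : F) : sw (sw a) = a := by
  by_cases h0 : a = 0
  · simp [sw, h0]
  by_cases h1 : a = 1
  · simp [sw, h0, h1]
  · simp [sw, h0, h1]

lemma sw_bij : Function.Bijective (sw : F → F) :=
  Function.Involutive.bijective sw_invol

lemma inv_bij : Function.Bijective (fun a : F => a⁻¹) :=
  Function.Involutive.bijective (fun a => inv_inv a)

lemma shape_bij (k : F) : Function.Bijective (fun y : F => sw (y⁻¹ + k)) := by
  have h1 : Function.Bijective (fun y : F => y + k) := (Equiv.addRight k).bijective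
  exact sw_bij.comp (h1.comp inv_bij)

lemma sum_one_eq_zero : ∑ _a : F, (1 : F) = 0 := by
  simp [Finset.card_univ, FiniteField.cast_card_eq_zero]

lemma sum_pow_eq_zero {n : ℕ} (h : n < Fintype.card F - 1) : ∑ a : F, a ^ n = 0 :=
  FiniteField.sum_pow_lt_card_sub_one (K := F) n h

lemma sum_id_eq_zero (hq : 5 ≤ Fintype.card F) : ∑ a : F, a = 0 := by
  have := sum_pow_eq_zero (F := F) (n := 1) (by omega)
  simpa using this

lemma sum_inv_reindex (g : F → F) : ∑ a : F, g a⁻¹ = ∑ a : F, g a :=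
  Fintype.sum_bijective _ (inv_bij (F := F)) _ g (fun _ => rfl)

lemma sum_shift (b : F) (g : F → F) : ∑ a : F, g (a + b) = ∑ a : F, g a :=
  Fintype.sum_bijective _ (Equiv.addRight b).bijective _ g (fun _ => rfl)

lemma sum_inv_pow_eq_zero {n : ℕ} (h0 : n ≠ 0) (h : n < Fintype.card F - 1) :
    ∑ a : F, (a⁻¹) ^ n = 0 := by
  rw [sum_inv_reindex (fun a => a ^ n)]
  exact sum_pow_eq_zero h

lemma sum_sub_inv_pow (hq : 5 ≤ Fintype.card F) (k : F) {n : ℕ} (h0 : n ≠ 0) (h : n ≤ 3) :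
    ∑ z : F, ((z - k)⁻¹) ^ n = 0 := by
  have := sum_shift k (fun z => ((z - k)⁻¹) ^ n)
  simp only [add_sub_cancel_right] at this
  rw [← this]
  exact sum_inv_pow_eq_zero h0 (by omega)

lemma sum_sub_inv (hq : 5 ≤ Fintype.card F) (k : F) : ∑ z : F, (z - k)⁻¹ = 0 := by
  have := sum_sub_inv_pow hq k (n := 1) one_ne_zero (by omega)
  simpa using this

lemma sum_mul_self_inv (g : F → F) :
    ∑ w : F, g w * (w * w⁻¹) = (∑ w : F, g w) - g 0 := by
  have h : ∀ w : F, g w * (w * w⁻¹) = g w - (if w = 0 then g w else 0) := by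
    intro w
    by_cases hw : w = 0
    · simp [hw]
    · simp [hw, mul_inv_cancel₀]
  rw [Finset.sum_congr rfl fun w _ => h w, Finset.sum_sub_distrib,
    Finset.sum_ite_eq' Finset.univ (0 : F) g]
  simp

lemma sum_self_inv (k : F) : ∑ z : F, (z - k) * (z - k)⁻¹ = -1 := by
  have h := sum_shift k (fun z => (z - k) * (z - k)⁻¹)
  simp only [add_sub_cancel_right] at h
  rw [← h]
  have h2 := sum_mul_self_inv (fun _ => (1 : F))
  simp only [one_mul] at h2
  rw [h2, sum_one_eq_zero, zero_sub]

lemma sum_add_inv_pow (hq : 5 ≤ Fintype.card F) (t : F) {n : ℕ} (h0 : n ≠ 0) (h : n ≤ 3) :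
    ∑ w : F, ((w + t)⁻¹) ^ n = 0 := by
  have h4 := sum_sub_inv_pow hq (-t) h0 h
  simp only [sub_neg_eq_add] at h4
  exact h4

lemma sumA (hq : 5 ≤ Fintype.card F) (b k : F) :
    ∑ z : F, (z - b)⁻¹ * ((z - k) * (z - k)⁻¹) = -((k - b)⁻¹) := by
  have h := sum_shift k (fun z => (z - b)⁻¹ * ((z - k) * (z - k)⁻¹))
  simp only [add_sub_cancel_right] at h
  rw [← h]
  have h2 := sum_mul_self_inv (fun w => (w + k - b)⁻¹)
  rw [h2]
  have h3 : ∑ w : F, (w + k - b)⁻¹ = 0 := by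
    have h4 := sum_add_inv_pow hq (k - b) (n := 1) one_ne_zero (by omega)
    simp only [pow_one] at h4
    calc ∑ w : F, (w + k - b)⁻¹ = ∑ w : F, (w + (k - b))⁻¹ := by
          apply Finset.sum_congr rfl; intros; rw [add_sub_assoc]
      _ = 0 := h4
  rw [h3, zero_sub]
  ring_nf

lemma sumA2 (hq : 5 ≤ Fintype.card F) (b k : F) :
    ∑ z : F, ((z - b)⁻¹) ^ 2 * ((z - k) * (z - k)⁻¹) = -(((k - b)⁻¹) ^ 2) := by
  have h := sum_shift k (fun z => ((z - b)⁻¹) ^ 2 * ((z - k) * (z - k)⁻¹))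
  simp only [add_sub_cancel_right] at h
  rw [← h]
  have h2 := sum_mul_self_inv (fun w => ((w + k - b)⁻¹) ^ 2)
  rw [h2]
  have h3 : ∑ w : F, ((w + k - b)⁻¹) ^ 2 = 0 := by
    have h4 := sum_add_inv_pow hq (k - b) (n := 2) two_ne_zero (by omega)
    calc ∑ w : F, ((w + k - b)⁻¹) ^ 2 = ∑ w : F, ((w + (k - b))⁻¹) ^ 2 := by
          apply Finset.sum_congr rfl; intros; rw [add_sub_assoc]
      _ = 0 := h4
  rw [h3, zero_sub]
  ring_nf

lemma sumR (hq : 5 ≤ Fintype.card F) (b : F) : ∑ z : F, (z - b)⁻¹ * z = -1 := by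
  have h : ∀ z : F, (z - b)⁻¹ * z = (z - b) * (z - b)⁻¹ + b * (z - b)⁻¹ := by
    intro z; ring
  rw [Finset.sum_congr rfl fun z _ => h z, Finset.sum_add_distrib, sum_self_inv,
    ← Finset.mul_sum, sum_sub_inv hq, mul_zero, add_zero]

lemma keyreduce (h : F → F) (y : F) :
    ∑ c : F, c * h (y⁻¹ + c⁻¹) = ∑ z : F, (z - y⁻¹)⁻¹ * h z := by
  have A : ∑ c : F, c * h (y⁻¹ + c⁻¹) = ∑ c : F, c⁻¹ * h (y⁻¹ + c) := by
    have := sum_inv_reindex (fun c : F => c⁻¹ * h (y⁻¹ + c))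
    simp only [inv_inv] at this
    exact this
  rw [A]
  have B := sum_shift y⁻¹ (fun z => (z - y⁻¹)⁻¹ * h z)
  simp only [add_sub_cancel_right] at B
  rw [← B]
  apply Finset.sum_congr rfl
  intro c _
  rw [add_comm]

lemma sw_eq (z : F) :
    sw z = z + (if z = 0 then 1 else 0) - (if z = 1 then 1 else 0) := by
  by_cases h0 : z = 0
  · simp [sw, h0]
  by_cases h1 : z = 1
  · simp [sw, h0, h1]
  · simp [sw, h0, h1]

lemma Wsw_eq (z : F) : Wf (sw z) = z * (z - 1)⁻¹ + (if z = 1 then 1 else 0) := by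
  by_cases h0 : z = 0
  · simp [sw, Wf, h0]
  by_cases h1 : z = 1
  · simp [sw, Wf, h0, h1]
  · have hz1 : z - 1 ≠ 0 := sub_ne_zero.mpr h1
    simp only [sw, h0, h1, if_false, Wf, if_neg]
    field_simp
    ring

lemma Wsw_sq_eq (z : F) :
    (Wf (sw z)) ^ 2 = z ^ 2 * ((z - 1)⁻¹) ^ 2 + (if z = 1 then 1 else 0) := by
  by_cases h1 : z = 1
  · simp [sw, Wf, h1]
  · rw [Wsw_eq, if_neg h1]
    ring

lemma L1 (hq : 5 ≤ Fintype.card F) (y : F) :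
    ∑ c : F, c * sw (y⁻¹ + c⁻¹) = -1 - y - Wf y := by
  rw [keyreduce]
  have h : ∀ z : F, (z - y⁻¹)⁻¹ * sw z
      = (z - y⁻¹)⁻¹ * z + (z - y⁻¹)⁻¹ * (if z = 0 then 1 else 0)
        - (z - y⁻¹)⁻¹ * (if z = 1 then 1 else 0) := by
    intro z; rw [sw_eq]; ring
  rw [Finset.sum_congr rfl fun z _ => h z, Finset.sum_sub_distrib, Finset.sum_add_distrib,
    sumR hq]
  simp only [mul_ite, mul_one, mul_zero, Finset.sum_ite_eq', Finset.mem_univ, if_true]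
  rw [Wf, zero_sub, inv_neg, inv_inv]
  ring

lemma pf2 (b : F) (hb : b ≠ 1) (z : F) :
    (z - b)⁻¹ * (z * (z - 1)⁻¹)
      = b * (b - 1)⁻¹ * ((z - b)⁻¹ * ((z - 1) * (z - 1)⁻¹))
        + (1 - b)⁻¹ * ((z - 1)⁻¹ * ((z - b) * (z - b)⁻¹)) := by
  by_cases hz1 : z = 1
  · simp [hz1]
  by_cases hzb : z = b
  · simp [hzb]
  · have h1 : z - 1 ≠ 0 := sub_ne_zero.mpr hz1
    have h2 : z - b ≠ 0 := sub_ne_zero.mpr hzb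
    have h3 : b - 1 ≠ 0 := sub_ne_zero.mpr hb
    rw [mul_inv_cancel₀ h1, mul_inv_cancel₀ h2,
      show (1 : F) - b = -(b - 1) by ring, inv_neg]
    field_simp
    ring

lemma L2 (hq : 5 ≤ Fintype.card F) (y : F) :
    ∑ c : F, c * Wf (sw (y⁻¹ + c⁻¹)) = 2 * (Wf y) ^ 2 := by
  rw [keyreduce (fun z => Wf (sw z)) y, show Wf y = (1 - y⁻¹)⁻¹ from rfl]
  generalize y⁻¹ = b
  have h : ∀ z : F, (z - b)⁻¹ * Wf (sw z)
      = (z - b)⁻¹ * (z * (z - 1)⁻¹) + (z - b)⁻¹ * (if z = 1 then 1 else 0) := by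
    intro z; rw [Wsw_eq]; ring
  rw [Finset.sum_congr rfl fun z _ => h z, Finset.sum_add_distrib]
  simp only [mul_ite, mul_one, mul_zero, Finset.sum_ite_eq', Finset.mem_univ, if_true]
  by_cases hb : b = 1
  · rw [hb]
    have h2 : ∀ z : F, (z - 1)⁻¹ * (z * (z - 1)⁻¹)
        = (z - 1)⁻¹ * ((z - 1) * (z - 1)⁻¹) + ((z - 1)⁻¹) ^ 2 := by
      intro z; ring
    rw [Finset.sum_congr rfl fun z _ => h2 z, Finset.sum_add_distrib, sumA hq 1 1,
      sum_sub_inv_pow hq 1 two_ne_zero (by omega)]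
    simp
  · have h2 : ∀ z : F, (z - b)⁻¹ * (z * (z - 1)⁻¹)
        = b * (b - 1)⁻¹ * ((z - b)⁻¹ * ((z - 1) * (z - 1)⁻¹))
          + (1 - b)⁻¹ * ((z - 1)⁻¹ * ((z - b) * (z - b)⁻¹)) := fun z => pf2 b hb z
    rw [Finset.sum_congr rfl fun z _ => h2 z, Finset.sum_add_distrib, ← Finset.mul_sum,
      ← Finset.mul_sum, sumA hq b 1, sumA hq 1 b,
      show (1 : F) - b = -(b - 1) by ring, inv_neg]
    have h3 : b - 1 ≠ 0 := sub_ne_zero.mpr hb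
    field_simp
    ring

lemma pfUV (b : F) (hb : b ≠ 1) (z : F) :
    (z - b)⁻¹ * (z - 1)⁻¹
      = (b - 1)⁻¹ * ((z - b)⁻¹ * ((z - 1) * (z - 1)⁻¹)
          - (z - 1)⁻¹ * ((z - b) * (z - b)⁻¹)) := by
  by_cases hz1 : z = 1
  · simp [hz1]
  by_cases hzb : z = b
  · simp [hzb]
  · have h1 : z - 1 ≠ 0 := sub_ne_zero.mpr hz1
    have h2 : z - b ≠ 0 := sub_ne_zero.mpr hzb
    have h3 : b - 1 ≠ 0 := sub_ne_zero.mpr hb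
    rw [mul_inv_cancel₀ h1, mul_inv_cancel₀ h2]
    field_simp
    try ring

lemma sumUV (hq : 5 ≤ Fintype.card F) (b : F) (hb : b ≠ 1) :
    ∑ z : F, (z - b)⁻¹ * (z - 1)⁻¹ = 2 * ((b - 1)⁻¹) ^ 2 := by
  have h3 : b - 1 ≠ 0 := sub_ne_zero.mpr hb
  rw [Finset.sum_congr rfl fun z _ => pfUV b hb z, ← Finset.mul_sum,
    Finset.sum_sub_distrib, sumA hq b 1, sumA hq 1 b,
    show (1 : F) - b = -(b - 1) by ring, inv_neg]
  ring

lemma collapseUV (b : F) (z : F) :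
    ((z - b)⁻¹ * (z - 1)⁻¹) * ((z - 1) * (z - 1)⁻¹) = (z - b)⁻¹ * (z - 1)⁻¹ := by
  by_cases hz1 : z = 1
  · simp [hz1]
  · have h1 : z - 1 ≠ 0 := sub_ne_zero.mpr hz1
    rw [mul_inv_cancel₀ h1, mul_one]

lemma pfUV2 (b : F) (hb : b ≠ 1) (z : F) :
    (z - b)⁻¹ * ((z - 1)⁻¹) ^ 2
      = (b - 1)⁻¹ * (((z - b)⁻¹ * (z - 1)⁻¹) * ((z - 1) * (z - 1)⁻¹)
          - ((z - 1)⁻¹) ^ 2 * ((z - b) * (z - b)⁻¹)) := by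
  by_cases hz1 : z = 1
  · simp [hz1]
  by_cases hzb : z = b
  · simp [hzb]
  · have h1 : z - 1 ≠ 0 := sub_ne_zero.mpr hz1
    have h2 : z - b ≠ 0 := sub_ne_zero.mpr hzb
    have h3 : b - 1 ≠ 0 := sub_ne_zero.mpr hb
    rw [mul_inv_cancel₀ h1, mul_inv_cancel₀ h2]
    field_simp
    try ring

lemma sumUV2 (hq : 5 ≤ Fintype.card F) (b : F) (hb : b ≠ 1) :
    ∑ z : F, (z - b)⁻¹ * ((z - 1)⁻¹) ^ 2 = 3 * ((b - 1)⁻¹) ^ 3 := by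
  have h3 : b - 1 ≠ 0 := sub_ne_zero.mpr hb
  rw [Finset.sum_congr rfl fun z _ => pfUV2 b hb z, ← Finset.mul_sum,
    Finset.sum_sub_distrib, Finset.sum_congr rfl fun z _ => collapseUV b z,
    sumUV hq b hb, sumA2 hq 1 b]
  ring

lemma pfZ (b : F) (z : F) :
    (z - b)⁻¹ * (z ^ 2 * ((z - 1)⁻¹) ^ 2)
      = (z - b)⁻¹ * ((z - 1) * (z - 1)⁻¹) + 2 * ((z - b)⁻¹ * (z - 1)⁻¹)
        + (z - b)⁻¹ * ((z - 1)⁻¹) ^ 2 := by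
  by_cases hz1 : z = 1
  · simp [hz1]
  · have h1 : z - 1 ≠ 0 := sub_ne_zero.mpr hz1
    have inner : z ^ 2 * ((z - 1)⁻¹) ^ 2
        = (z - 1) * (z - 1)⁻¹ + 2 * (z - 1)⁻¹ + ((z - 1)⁻¹) ^ 2 := by
      field_simp
      ring
    rw [inner]
    ring

lemma L3 (hq : 5 ≤ Fintype.card F) (y : F) :
    ∑ c : F, c * (Wf (sw (y⁻¹ + c⁻¹))) ^ 2
      = (4 * y⁻¹ - 1) * ((y⁻¹ - 1) ^ 3)⁻¹ := by
  rw [keyreduce (fun z => (Wf (sw z)) ^ 2) y]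
  generalize y⁻¹ = b
  have h : ∀ z : F, (z - b)⁻¹ * (Wf (sw z)) ^ 2
      = (z - b)⁻¹ * (z ^ 2 * ((z - 1)⁻¹) ^ 2) + (z - b)⁻¹ * (if z = 1 then 1 else 0) := by
    intro z; rw [Wsw_sq_eq]; ring
  rw [Finset.sum_congr rfl fun z _ => h z, Finset.sum_add_distrib]
  simp only [mul_ite, mul_one, mul_zero, Finset.sum_ite_eq', Finset.mem_univ, if_true]
  rw [Finset.sum_congr rfl fun z _ => pfZ b z, Finset.sum_add_distrib,
    Finset.sum_add_distrib, sumA hq b 1, ← Finset.mul_sum]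
  by_cases hb : b = 1
  · rw [hb]
    have e1 : ∑ z : F, (z - 1)⁻¹ * (z - 1)⁻¹ = 0 := by
      have := sum_sub_inv_pow hq (1 : F) two_ne_zero (by omega)
      rw [← this]
      exact Finset.sum_congr rfl fun z _ => (sq ((z - (1:F))⁻¹)).symm
    have e2 : ∑ z : F, (z - 1)⁻¹ * ((z - 1)⁻¹) ^ 2 = 0 := by
      have := sum_sub_inv_pow hq (1 : F) three_ne_zero (by omega)
      rw [← this]
      exact Finset.sum_congr rfl fun z _ => by ring
    rw [e1, e2]
    norm_num
  · have h3 : b - 1 ≠ 0 := sub_ne_zero.mpr hb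
    rw [sumUV hq b hb, sumUV2 hq b hb, show (1 : F) - b = -(b - 1) by ring, inv_neg, ← inv_pow]
    have hw : (b - 1) * (b - 1)⁻¹ = 1 := mul_inv_cancel₀ h3
    linear_combination (-4 * ((b - 1)⁻¹) ^ 2) * hw

lemma sum_ite_one (k : F) (c : F) : ∑ a : F, (if a = k then c else 0) = c := by
  simp [Finset.sum_ite_eq', Finset.mem_univ]

lemma P1 (hq : 5 ≤ Fintype.card F) : ∑ a : F, a * Wf a = -2 := by
  have h : ∀ a : F, a * Wf a
      = (a - 1) + 2 + (a - 1)⁻¹ - (if a = 1 then 2 else 0) := by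
    intro a
    by_cases h0 : a = 0
    · simp [Wf, h0]
      norm_num
    by_cases h1 : a = 1
    · simp [Wf, h1]
    · have ha : a ≠ 0 := h0
      have hb : a - 1 ≠ 0 := sub_ne_zero.mpr h1
      have hc : 1 - a⁻¹ ≠ 0 := by
        intro hcc
        apply hb
        have : a * (1 - a⁻¹) = a - 1 := by field_simp
        rw [← this, hcc, mul_zero]
      rw [Wf, if_neg h1, sub_zero]
      field_simp
      ring
  rw [Finset.sum_congr rfl fun a _ => h a, Finset.sum_sub_distrib, Finset.sum_add_distrib,
    Finset.sum_add_distrib, sum_ite_one]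
  have e1 : ∑ a : F, (a - 1) = 0 := by
    have h2 := sum_shift (1 : F) (fun a => a - 1)
    simp only [add_sub_cancel_right] at h2
    rw [← h2, sum_id_eq_zero hq]
  have e2 : ∑ _a : F, (2 : F) = 0 := by
    have h1 := sum_one_eq_zero (F := F)
    calc ∑ _a : F, (2 : F) = ∑ _a : F, ((1 : F) + 1) := by norm_num
      _ = 0 := by rw [Finset.sum_add_distrib, h1]; simp
  rw [e1, e2, sum_sub_inv hq 1]
  norm_num

lemma P2 (hq : 5 ≤ Fintype.card F) : ∑ a : F, a * (Wf a) ^ 2 = -3 := by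
  have h : ∀ a : F, a * (Wf a) ^ 2
      = (a - 1) + 3 + 3 * (a - 1)⁻¹ + ((a - 1)⁻¹) ^ 2 - (if a = 1 then 3 else 0) := by
    intro a
    by_cases h0 : a = 0
    · simp [Wf, h0]
    by_cases h1 : a = 1
    · simp [Wf, h1]
    · have ha : a ≠ 0 := h0
      have hb : a - 1 ≠ 0 := sub_ne_zero.mpr h1
      have hc : 1 - a⁻¹ ≠ 0 := by
        intro hcc
        apply hb
        have : a * (1 - a⁻¹) = a - 1 := by field_simp
        rw [← this, hcc, mul_zero]
      rw [Wf, if_neg h1, sub_zero]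
      field_simp
      ring
  rw [Finset.sum_congr rfl fun a _ => h a, Finset.sum_sub_distrib, Finset.sum_add_distrib,
    Finset.sum_add_distrib, Finset.sum_add_distrib, sum_ite_one, ← Finset.mul_sum]
  have e1 : ∑ a : F, (a - 1) = 0 := by
    have h2 := sum_shift (1 : F) (fun a => a - 1)
    simp only [add_sub_cancel_right] at h2
    rw [← h2, sum_id_eq_zero hq]
  have e2 : ∑ _a : F, (3 : F) = 0 := by
    have h1 := sum_one_eq_zero (F := F)
    calc ∑ _a : F, (3 : F) = ∑ _a : F, ((1 : F) + 1 + 1) := by norm_num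
      _ = 0 := by rw [Finset.sum_add_distrib, Finset.sum_add_distrib, h1]; simp
  rw [e1, e2, sum_sub_inv hq 1, sum_sub_inv_pow hq 1 two_ne_zero (by omega)]
  norm_num

lemma P3 (hq : 5 ≤ Fintype.card F) :
    ∑ a : F, a * ((4 * a⁻¹ - 1) * ((a⁻¹ - 1) ^ 3)⁻¹) = 0 := by
  have h : ∀ a : F, a * ((4 * a⁻¹ - 1) * ((a⁻¹ - 1) ^ 3)⁻¹)
      = (a - 1) - 6 * (a - 1)⁻¹ - 8 * ((a - 1)⁻¹) ^ 2 - 3 * ((a - 1)⁻¹) ^ 3 := by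
    intro a
    by_cases h0 : a = 0
    · rw [h0]
      norm_num
    by_cases h1 : a = 1
    · rw [h1]
      norm_num
    · have ha : a ≠ 0 := h0
      have hb : a - 1 ≠ 0 := sub_ne_zero.mpr h1
      have k1 : a⁻¹ - 1 = -(a - 1) * a⁻¹ := by
        field_simp
        ring
      have k2 : ((a⁻¹ - 1) ^ 3)⁻¹ = -(a ^ 3 * ((a - 1)⁻¹) ^ 3) := by
        rw [k1, ← inv_pow, mul_inv, inv_neg, inv_inv]
        ring
      rw [k2]
      field_simp
      ring
  rw [Finset.sum_congr rfl fun a _ => h a, Finset.sum_sub_distrib, Finset.sum_sub_distrib,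
    Finset.sum_sub_distrib, ← Finset.mul_sum, ← Finset.mul_sum, ← Finset.mul_sum]
  have e1 : ∑ a : F, (a - 1) = 0 := by
    have h2 := sum_shift (1 : F) (fun a => a - 1)
    simp only [add_sub_cancel_right] at h2
    rw [← h2, sum_id_eq_zero hq]
  rw [e1, sum_sub_inv hq 1, sum_sub_inv_pow hq 1 two_ne_zero (by omega),
    sum_sub_inv_pow hq 1 three_ne_zero (by omega)]
  norm_num

/-- `G2 a b = sw(a⁻¹ + b⁻¹)`. -/
def G2 (a b : F) : F := sw (a⁻¹ + b⁻¹)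
def G3 (a b c : F) : F := sw ((G2 a b)⁻¹ + c⁻¹)
def G4 (a b c d : F) : F := sw ((G3 a b c)⁻¹ + d⁻¹)

lemma bigsum (hq : 5 ≤ Fintype.card F) :
    ∑ a : F, ∑ b : F, ∑ c : F, ∑ d : F, G4 a b c d * (a * b * c * d) = -4 := by
  have hd : ∀ a b c : F, ∑ d : F, G4 a b c d * (a * b * c * d)
      = a * b * c * (-1 - G3 a b c - Wf (G3 a b c)) := by
    intro a b c
    rw [show a * b * c * (-1 - G3 a b c - Wf (G3 a b c))
        = a * b * c * ∑ d : F, d * sw ((G3 a b c)⁻¹ + d⁻¹) by rw [L1 hq]]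
    rw [Finset.mul_sum]
    apply Finset.sum_congr rfl
    intro d _
    rw [G4]
    ring
  have hc : ∀ a b : F, ∑ c : F, a * b * c * (-1 - G3 a b c - Wf (G3 a b c))
      = a * b * (1 + G2 a b + Wf (G2 a b) - 2 * (Wf (G2 a b)) ^ 2) := by
    intro a b
    have split : ∀ c : F, a * b * c * (-1 - G3 a b c - Wf (G3 a b c))
        = a * b * (-(c * 1) - c * sw ((G2 a b)⁻¹ + c⁻¹) - c * Wf (sw ((G2 a b)⁻¹ + c⁻¹))) := by
      intro c
      rw [G3]
      ring
    rw [Finset.sum_congr rfl fun c _ => split c, ← Finset.mul_sum]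
    have : ∑ c : F, (-(c * 1) - c * sw ((G2 a b)⁻¹ + c⁻¹) - c * Wf (sw ((G2 a b)⁻¹ + c⁻¹)))
        = 1 + G2 a b + Wf (G2 a b) - 2 * (Wf (G2 a b)) ^ 2 := by
      rw [Finset.sum_sub_distrib, Finset.sum_sub_distrib, Finset.sum_neg_distrib]
      rw [L1 hq (G2 a b), L2 hq (G2 a b)]
      have : ∑ c : F, c * 1 = 0 := by
        simp only [mul_one]
        exact sum_id_eq_zero hq
      rw [this]
      ring
    rw [this]
  have hb : ∀ a : F, ∑ b : F, a * b * (1 + G2 a b + Wf (G2 a b) - 2 * (Wf (G2 a b)) ^ 2)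
      = a * (-1 - a - Wf a + 2 * (Wf a) ^ 2
          - 2 * ((4 * a⁻¹ - 1) * ((a⁻¹ - 1) ^ 3)⁻¹)) := by
    intro a
    have split : ∀ b : F, a * b * (1 + G2 a b + Wf (G2 a b) - 2 * (Wf (G2 a b)) ^ 2)
        = a * (b * 1 + b * sw (a⁻¹ + b⁻¹) + b * Wf (sw (a⁻¹ + b⁻¹))
            - 2 * (b * (Wf (sw (a⁻¹ + b⁻¹))) ^ 2)) := by
      intro b
      rw [G2]
      ring
    rw [Finset.sum_congr rfl fun b _ => split b, ← Finset.mul_sum]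
    congr 1
    rw [Finset.sum_sub_distrib, Finset.sum_add_distrib, Finset.sum_add_distrib,
      ← Finset.mul_sum, L1 hq a, L2 hq a, L3 hq a]
    have : ∑ b : F, b * 1 = 0 := by
      simp only [mul_one]
      exact sum_id_eq_zero hq
    rw [this]
    ring
  rw [Finset.sum_congr rfl fun a _ => (Finset.sum_congr rfl fun b _ =>
    (Finset.sum_congr rfl fun c _ => hd a b c))]
  rw [Finset.sum_congr rfl fun a _ => (Finset.sum_congr rfl fun b _ => hc a b)]
  rw [Finset.sum_congr rfl fun a _ => hb a]
  have expand : ∀ a : F, a * (-1 - a - Wf a + 2 * (Wf a) ^ 2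
      - 2 * ((4 * a⁻¹ - 1) * ((a⁻¹ - 1) ^ 3)⁻¹))
      = -(a * 1) - a ^ 2 - a * Wf a + 2 * (a * (Wf a) ^ 2)
        - 2 * (a * ((4 * a⁻¹ - 1) * ((a⁻¹ - 1) ^ 3)⁻¹)) := by
    intro a
    ring
  rw [Finset.sum_congr rfl fun a _ => expand a]
  rw [Finset.sum_sub_distrib, Finset.sum_add_distrib, Finset.sum_sub_distrib,
    Finset.sum_sub_distrib, Finset.sum_neg_distrib, ← Finset.mul_sum, ← Finset.mul_sum,
    P1 hq, P2 hq, P3 hq, sum_pow_eq_zero (by omega : 2 < Fintype.card F - 1)]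
  have : ∑ a : F, a * 1 = 0 := by
    simp only [mul_one]
    exact sum_id_eq_zero hq
  rw [this]
  norm_num



lemma G2_bij_left (b : F) : Function.Bijective (fun a : F => G2 a b) :=
  shape_bij b⁻¹

lemma G2_bij_right (a : F) : Function.Bijective (fun b : F => G2 a b) := by
  have h : (fun b : F => G2 a b) = fun b : F => sw (b⁻¹ + a⁻¹) := by
    funext b
    rw [G2, add_comm]
  rw [h]
  exact shape_bij a⁻¹

lemma G3_bij₀ (b c : F) : Function.Bijective (fun a : F => G3 a b c) := by
  have h : (fun a : F => G3 a b c) = (fun y : F => sw (y⁻¹ + c⁻¹)) ∘ (fun a : F => G2 a b) := by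
    funext a
    rfl
  rw [h]
  exact (shape_bij c⁻¹).comp (G2_bij_left b)

lemma G3_bij₁ (a c : F) : Function.Bijective (fun b : F => G3 a b c) := by
  have h : (fun b : F => G3 a b c) = (fun y : F => sw (y⁻¹ + c⁻¹)) ∘ (fun b : F => G2 a b) := by
    funext b
    rfl
  rw [h]
  exact (shape_bij c⁻¹).comp (G2_bij_right a)

lemma G3_bij₂ (a b : F) : Function.Bijective (fun c : F => G3 a b c) := by
  have h : (fun c : F => G3 a b c) = fun c : F => sw (c⁻¹ + (G2 a b)⁻¹) := by
    funext c
    rw [G3, add_comm]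
  rw [h]
  exact shape_bij (G2 a b)⁻¹

lemma sum_sw_shape (hq : 5 ≤ Fintype.card F) (k : F) : ∑ z : F, sw (z⁻¹ + k) = 0 := by
  have h := (shape_bij k).sum_comp (fun x : F => x)
  rw [h]
  exact sum_id_eq_zero hq

lemma slice_d (hq : 5 ≤ Fintype.card F) (a b c : F) : ∑ d : F, G4 a b c d = 0 := by
  have h : ∀ d : F, G4 a b c d = sw (d⁻¹ + (G3 a b c)⁻¹) := by
    intro d
    rw [G4, add_comm]
  rw [Finset.sum_congr rfl fun d _ => h d]
  exact sum_sw_shape hq _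

lemma slice_c (hq : 5 ≤ Fintype.card F) (a b d : F) : ∑ c : F, G4 a b c d = 0 := by
  have h := (G3_bij₂ a b).sum_comp (fun y : F => sw (y⁻¹ + d⁻¹))
  calc ∑ c : F, G4 a b c d = ∑ c : F, sw ((G3 a b c)⁻¹ + d⁻¹) := rfl
    _ = ∑ y : F, sw (y⁻¹ + d⁻¹) := h
    _ = 0 := sum_sw_shape hq _

lemma slice_b (hq : 5 ≤ Fintype.card F) (a c d : F) : ∑ b : F, G4 a b c d = 0 := by
  have h := (G3_bij₁ a c).sum_comp (fun y : F => sw (y⁻¹ + d⁻¹))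
  calc ∑ b : F, G4 a b c d = ∑ b : F, sw ((G3 a b c)⁻¹ + d⁻¹) := rfl
    _ = ∑ y : F, sw (y⁻¹ + d⁻¹) := h
    _ = 0 := sum_sw_shape hq _

lemma slice_a (hq : 5 ≤ Fintype.card F) (b c d : F) : ∑ a : F, G4 a b c d = 0 := by
  have h := (G3_bij₀ b c).sum_comp (fun y : F => sw (y⁻¹ + d⁻¹))
  calc ∑ a : F, G4 a b c d = ∑ a : F, sw ((G3 a b c)⁻¹ + d⁻¹) := rfl
    _ = ∑ y : F, sw (y⁻¹ + d⁻¹) := h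
    _ = 0 := sum_sw_shape hq _

lemma PS_card_sub_one (hq : 5 ≤ Fintype.card F) :
    ∑ a : F, a ^ (Fintype.card F - 1) = -1 := by
  have h : ∀ a : F, a ^ (Fintype.card F - 1) = 1 - (if a = 0 then 1 else 0) := by
    intro a
    by_cases ha : a = 0
    · rw [ha, if_pos rfl, zero_pow (by omega : Fintype.card F - 1 ≠ 0), sub_self]
    · rw [FiniteField.pow_card_sub_one_eq_one a ha, if_neg ha, sub_zero]
  rw [Finset.sum_congr rfl fun a _ => h a, Finset.sum_sub_distrib, sum_one_eq_zero,
    sum_ite_one (0 : F) 1]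
  norm_num

lemma PS_eq (hq : 5 ≤ Fintype.card F) {k : ℕ} (hk : k < 2 * (Fintype.card F - 1)) :
    ∑ a : F, a ^ k = if k = Fintype.card F - 1 then -1 else 0 := by
  by_cases h1 : k = Fintype.card F - 1
  · rw [if_pos h1, h1]
    exact PS_card_sub_one hq
  rw [if_neg h1]
  by_cases h2 : k < Fintype.card F - 1
  · exact sum_pow_eq_zero h2
  · have hj : ∀ a : F, a ^ k = a ^ (k - (Fintype.card F - 1)) := by
      intro a
      by_cases ha : a = 0
      · rw [ha, zero_pow (by omega), zero_pow (by omega)]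
      · have e : a ^ k = a ^ (Fintype.card F - 1) * a ^ (k - (Fintype.card F - 1)) := by
          rw [← pow_add]
          congr 1
          omega
        rw [e, FiniteField.pow_card_sub_one_eq_one a ha, one_mul]
    rw [Finset.sum_congr rfl fun a _ => hj a]
    exact sum_pow_eq_zero (by omega)

/-- Equivalence between quadruples and functions on `Fin 4`. -/
def e4 : (F × F × F × F) ≃ (Fin 4 → F) where
  toFun p := ![p.1, p.2.1, p.2.2.1, p.2.2.2]
  invFun x := (x 0, x 1, x 2, x 3)
  left_inv p := rfl
  right_inv x := by
    funext i
    fin_cases i <;> rfl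

lemma sum4 (f : (Fin 4 → F) → F) :
    ∑ x : Fin 4 → F, f x = ∑ a : F, ∑ b : F, ∑ c : F, ∑ d : F, f ![a, b, c, d] := by
  rw [← Fintype.sum_equiv (e4 (F := F)) (fun p => f (e4 p)) f (fun p => rfl)]
  rw [Fintype.sum_prod_type]
  apply Finset.sum_congr rfl
  intro a _
  rw [Fintype.sum_prod_type]
  apply Finset.sum_congr rfl
  intro b _
  rw [Fintype.sum_prod_type]
  rfl

lemma quadD (hq : 5 ≤ Fintype.card F) (i j k : ℕ) :
    ∑ a : F, ∑ b : F, ∑ c : F, ∑ d : F, G4 a b c d * (a ^ i * b ^ j * c ^ k * d ^ 0) = 0 := by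
  have inner : ∀ a b c : F, ∑ d : F, G4 a b c d * (a ^ i * b ^ j * c ^ k * d ^ 0) = 0 := by
    intro a b c
    simp only [pow_zero, mul_one]
    rw [← Finset.sum_mul, slice_d hq, zero_mul]
  rw [Finset.sum_congr rfl fun a _ => (Finset.sum_congr rfl fun b _ =>
    (Finset.sum_congr rfl fun c _ => inner a b c))]
  simp

lemma quadC (hq : 5 ≤ Fintype.card F) (i j l : ℕ) :
    ∑ a : F, ∑ b : F, ∑ c : F, ∑ d : F, G4 a b c d * (a ^ i * b ^ j * c ^ 0 * d ^ l) = 0 := by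
  have inner : ∀ a b : F, ∑ c : F, ∑ d : F, G4 a b c d * (a ^ i * b ^ j * c ^ 0 * d ^ l) = 0 := by
    intro a b
    rw [Finset.sum_comm]
    have h : ∀ d : F, ∑ c : F, G4 a b c d * (a ^ i * b ^ j * c ^ 0 * d ^ l) = 0 := by
      intro d
      simp only [pow_zero]
      rw [← Finset.sum_mul, slice_c hq, zero_mul]
    rw [Finset.sum_congr rfl fun d _ => h d, Finset.sum_const, smul_zero]
  rw [Finset.sum_congr rfl fun a _ => (Finset.sum_congr rfl fun b _ => inner a b)]
  simp

lemma quadB (hq : 5 ≤ Fintype.card F) (i k l : ℕ) :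
    ∑ a : F, ∑ b : F, ∑ c : F, ∑ d : F, G4 a b c d * (a ^ i * b ^ 0 * c ^ k * d ^ l) = 0 := by
  have inner : ∀ a : F, ∑ b : F, ∑ c : F, ∑ d : F, G4 a b c d * (a ^ i * b ^ 0 * c ^ k * d ^ l) = 0 := by
    intro a
    rw [Finset.sum_comm]
    have h1 : ∀ c : F, ∑ b : F, ∑ d : F, G4 a b c d * (a ^ i * b ^ 0 * c ^ k * d ^ l) = 0 := by
      intro c
      rw [Finset.sum_comm]
      have h2 : ∀ d : F, ∑ b : F, G4 a b c d * (a ^ i * b ^ 0 * c ^ k * d ^ l) = 0 := by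
        intro d
        simp only [pow_zero]
        rw [← Finset.sum_mul, slice_b hq, zero_mul]
      rw [Finset.sum_congr rfl fun d _ => h2 d, Finset.sum_const, smul_zero]
    rw [Finset.sum_congr rfl fun c _ => h1 c, Finset.sum_const, smul_zero]
  rw [Finset.sum_congr rfl fun a _ => inner a]
  simp

lemma quadA (hq : 5 ≤ Fintype.card F) (j k l : ℕ) :
    ∑ a : F, ∑ b : F, ∑ c : F, ∑ d : F, G4 a b c d * (a ^ 0 * b ^ j * c ^ k * d ^ l) = 0 := by
  rw [Finset.sum_comm]
  have h1 : ∀ b : F, ∑ a : F, ∑ c : F, ∑ d : F, G4 a b c d * (a ^ 0 * b ^ j * c ^ k * d ^ l) = 0 := by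
    intro b
    rw [Finset.sum_comm]
    have h2 : ∀ c : F, ∑ a : F, ∑ d : F, G4 a b c d * (a ^ 0 * b ^ j * c ^ k * d ^ l) = 0 := by
      intro c
      rw [Finset.sum_comm]
      have h3 : ∀ d : F, ∑ a : F, G4 a b c d * (a ^ 0 * b ^ j * c ^ k * d ^ l) = 0 := by
        intro d
        simp only [pow_zero]
        rw [← Finset.sum_mul, slice_a hq, zero_mul]
      rw [Finset.sum_congr rfl fun d _ => h3 d, Finset.sum_const, smul_zero]
    rw [Finset.sum_congr rfl fun c _ => h2 c, Finset.sum_const, smul_zero]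
  rw [Finset.sum_congr rfl fun b _ => h1 b, Finset.sum_const, smul_zero]

open MvPolynomial in
lemma coeff_formula (hq : 5 ≤ Fintype.card F) (P : MvPolynomial (Fin 4) F)
    (hred : ∀ i : Fin 4, P.degreeOf i < Fintype.card F)
    (D : Fin 4 → ℕ) (hD1 : ∀ i, 1 ≤ D i) (hD2 : ∀ i, D i ≤ Fintype.card F - 1) :
    P.coeff (Finsupp.equivFunOnFinite.symm D)
      = ∑ x : Fin 4 → F, eval x P * ∏ i, (x i) ^ (Fintype.card F - 1 - D i) := by
  have hmle : ∀ m ∈ P.support, ∀ i, m i ≤ Fintype.card F - 1 := by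
    intro m hm i
    have := (MvPolynomial.degreeOf_lt_iff (show 0 < Fintype.card F by omega)).mp (hred i) m hm
    omega
  have main : ∑ x : Fin 4 → F, eval x P * ∏ i, (x i) ^ (Fintype.card F - 1 - D i)
      = P.coeff (Finsupp.equivFunOnFinite.symm D) := by
    have step1 : ∀ x : Fin 4 → F, eval x P * ∏ i, (x i) ^ (Fintype.card F - 1 - D i)
        = ∑ m ∈ P.support, P.coeff m * ∏ i, (x i) ^ (m i + (Fintype.card F - 1 - D i)) := by
      intro x
      rw [eval_eq', Finset.sum_mul]
      apply Finset.sum_congr rfl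
      intro m _
      rw [mul_assoc, ← Finset.prod_mul_distrib]
      congr 1
      apply Finset.prod_congr rfl
      intro i _
      rw [← pow_add]
    rw [Finset.sum_congr rfl fun x _ => step1 x, Finset.sum_comm]
    have step2 : ∀ m ∈ P.support,
        ∑ x : Fin 4 → F, P.coeff m * ∏ i, (x i) ^ (m i + (Fintype.card F - 1 - D i))
          = P.coeff m * (if m = Finsupp.equivFunOnFinite.symm D then 1 else 0) := by
      intro m hm
      rw [← Finset.mul_sum]
      congr 1
      rw [← Fintype.prod_sum (fun (i : Fin 4) (a : F) => a ^ (m i + (Fintype.card F - 1 - D i)))]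
      by_cases hmD : m = Finsupp.equivFunOnFinite.symm D
      · rw [if_pos hmD]
        have hDi : ∀ i, m i = D i := by
          intro i
          rw [hmD]
          simp
        have hqi : ∀ i : Fin 4, m i + (Fintype.card F - 1 - D i) = Fintype.card F - 1 := by
          intro i
          have := hD1 i
          have := hD2 i
          have := hDi i
          omega
        calc ∏ i : Fin 4, ∑ a : F, a ^ (m i + (Fintype.card F - 1 - D i))
            = ∏ _i : Fin 4, (-1 : F) := by
              apply Finset.prod_congr rfl
              intro i _
              rw [hqi i]
              exact PS_card_sub_one hq
          _ = 1 := by norm_num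
      · rw [if_neg hmD]
        have hex : ∃ i, m i ≠ D i := by
          by_contra hc
          push_neg at hc
          apply hmD
          apply Finsupp.ext
          intro i
          simp [hc i]
        obtain ⟨i, hi⟩ := hex
        apply Finset.prod_eq_zero (Finset.mem_univ i)
        rw [PS_eq hq (by have := hmle m hm i; have := hD1 i; have := hD2 i; omega), if_neg]
        have := hD1 i
        have := hD2 i
        omega
    rw [Finset.sum_congr rfl step2]
    simp only [mul_ite, mul_one, mul_zero, Finset.sum_ite_eq']
    by_cases hin : Finsupp.equivFunOnFinite.symm D ∈ P.support
    · rw [if_pos hin]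
    · rw [if_neg hin, eq_comm]
      exact MvPolynomial.notMem_support_iff.mp hin
  exact main.symm

end LPP4



open MvPolynomial

/-- For `q = p^r > 3` with `p` an odd prime, `t(x) = x + ∑_{k=0}^{q-2} x^k`, and the
recursively defined `f₁ = x₁`, `fᵢ = ` reduced form of `t(f_{i-1}^{q-2} + xᵢ^{q-2})`,
the polynomial `f₄` has total degree `4(q-2)`. -/
theorem lpp_four_vars_max_degree {p r : ℕ} (hp : p.Prime) (hodd : p ≠ 2) (hr : 0 < r)
    {F : Type*} [Field F] [Fintype F] [DecidableEq F]
    (hF : Fintype.card F = p ^ r) (hq : 3 < Fintype.card F)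
    (t : Polynomial F)
    (ht : t = Polynomial.X + ∑ k ∈ Finset.range (Fintype.card F - 1), Polynomial.X ^ k)
    (f₂ : MvPolynomial (Fin 2) F)
    (hred₂ : ∀ i : Fin 2, f₂.degreeOf i < Fintype.card F)
    (heq₂ : ∀ x : Fin 2 → F, eval x f₂ =
      Polynomial.eval ((x 0) ^ (Fintype.card F - 2) + (x 1) ^ (Fintype.card F - 2)) t)
    (f₃ : MvPolynomial (Fin 3) F)
    (hred₃ : ∀ i : Fin 3, f₃.degreeOf i < Fintype.card F)
    (heq₃ : ∀ x : Fin 3 → F, eval x f₃ =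
      Polynomial.eval ((eval ![x 0, x 1] f₂) ^ (Fintype.card F - 2)
        + (x 2) ^ (Fintype.card F - 2)) t)
    (f₄ : MvPolynomial (Fin 4) F)
    (hred₄ : ∀ i : Fin 4, f₄.degreeOf i < Fintype.card F)
    (heq₄ : ∀ x : Fin 4 → F, eval x f₄ =
      Polynomial.eval ((eval ![x 0, x 1, x 2] f₃) ^ (Fintype.card F - 2)
        + (x 3) ^ (Fintype.card F - 2)) t) :
    f₄.totalDegree = 4 * (Fintype.card F - 2) := by
  have hp3 : 3 ≤ p := by
    have := hp.two_le
    omega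
  have hq4 : Fintype.card F ≠ 4 := by
    intro h4
    have hpd : p ∣ Fintype.card F := by
      rw [hF]
      exact dvd_pow_self p (by omega : r ≠ 0)
    rw [h4, show (4 : ℕ) = 2 ^ 2 from rfl] at hpd
    exact hodd ((Nat.prime_dvd_prime_iff_eq hp Nat.prime_two).mp (hp.dvd_of_dvd_pow hpd))
  have hq5 : 5 ≤ Fintype.card F := by omega
  -- characteristic facts
  have hcharp : CharP F p := by
    have hrc : CharP F (ringChar F) := ringChar.charP F
    have hprime : (ringChar F).Prime := CharP.char_is_prime F (ringChar F)
    obtain ⟨n, hn⟩ := FiniteField.card F (ringChar F)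
    have hdvd : ringChar F ∣ p ^ r := by
      rw [← hF, hn.2]
      exact dvd_pow_self _ (by exact_mod_cast n.2.ne')
    have heq : ringChar F = p :=
      (Nat.prime_dvd_prime_iff_eq hprime hp).mp (hprime.dvd_of_dvd_pow hdvd)
    rw [← heq]
    exact hrc
  have h4F : (-4 : F) ≠ 0 := by
    apply neg_ne_zero.mpr
    intro h
    have hcast : ((4 : ℕ) : F) = 0 := by exact_mod_cast h
    have hpd : p ∣ 4 := (CharP.cast_eq_zero_iff F p 4).mp hcast
    rw [show (4 : ℕ) = 2 ^ 2 from rfl] at hpd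
    exact hodd ((Nat.prime_dvd_prime_iff_eq hp Nat.prime_two).mp (hp.dvd_of_dvd_pow hpd))
  -- evaluation facts
  have hpow : ∀ a : F, a ^ (Fintype.card F - 2) = a⁻¹ := by
    intro a
    by_cases ha : a = 0
    · rw [ha, zero_pow (by omega : Fintype.card F - 2 ≠ 0), inv_zero]
    · have h1 : a * a ^ (Fintype.card F - 2) = 1 := by
        rw [← pow_succ']
        rw [show Fintype.card F - 2 + 1 = Fintype.card F - 1 by omega]
        exact FiniteField.pow_card_sub_one_eq_one a ha
      exact (inv_eq_of_mul_eq_one_right h1).symm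
  have htau : ∀ a : F, Polynomial.eval a t = LPP4.sw a := by
    intro a
    rw [ht, Polynomial.eval_add, Polynomial.eval_X, Polynomial.eval_finset_sum]
    simp only [Polynomial.eval_pow, Polynomial.eval_X]
    by_cases h0 : a = 0
    · rw [h0]
      have hs : ∑ k ∈ Finset.range (Fintype.card F - 1), (0 : F) ^ k = 1 := by
        rw [Finset.sum_eq_single 0]
        · exact pow_zero 0
        · intro k _ hk0
          exact zero_pow hk0
        · intro h
          exact absurd (Finset.mem_range.mpr (by omega)) h
      rw [hs, zero_add]
      simp [LPP4.sw]
    by_cases h1 : a = 1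
    · rw [h1]
      have hs : ∑ k ∈ Finset.range (Fintype.card F - 1), (1 : F) ^ k
          = (Fintype.card F : F) - 1 := by
        simp only [one_pow, Finset.sum_const, Finset.card_range, nsmul_eq_mul, mul_one]
        rw [Nat.cast_sub (by omega : 1 ≤ Fintype.card F), Nat.cast_one]
      rw [hs, FiniteField.cast_card_eq_zero]
      simp [LPP4.sw]
    · rw [geom_sum_eq h1, FiniteField.pow_card_sub_one_eq_one a h0, sub_self, zero_div,
        add_zero]
      simp [LPP4.sw, h0, h1]
  have heval2 : ∀ a b : F, eval ![a, b] f₂ = LPP4.G2 a b := by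
    intro a b
    rw [heq₂ ![a, b]]
    rw [show (![a, b] : Fin 2 → F) 0 = a from rfl, show (![a, b] : Fin 2 → F) 1 = b from rfl]
    rw [hpow, hpow, htau]
    rfl
  have heval3 : ∀ a b c : F, eval ![a, b, c] f₃ = LPP4.G3 a b c := by
    intro a b c
    rw [heq₃ ![a, b, c]]
    rw [show (![a, b, c] : Fin 3 → F) 0 = a from rfl,
      show (![a, b, c] : Fin 3 → F) 1 = b from rfl,
      show (![a, b, c] : Fin 3 → F) 2 = c from rfl]
    rw [heval2, hpow, hpow, htau]
    rfl
  have heval : ∀ x : Fin 4 → F, eval x f₄ = LPP4.G4 (x 0) (x 1) (x 2) (x 3) := by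
    intro x
    rw [heq₄ x, heval3, hpow, hpow, htau]
    rfl
  -- the lower bound: the coefficient of (q-2, q-2, q-2, q-2) is -4 ≠ 0
  set DF : Fin 4 →₀ ℕ :=
    Finsupp.equivFunOnFinite.symm (fun _ => Fintype.card F - 2) with hDF
  have hcoeff : f₄.coeff DF = -4 := by
    rw [hDF, LPP4.coeff_formula hq5 f₄ hred₄ (fun _ => Fintype.card F - 2)
      (fun i => by show 1 ≤ Fintype.card F - 2; omega)
      (fun i => by show Fintype.card F - 2 ≤ Fintype.card F - 1; omega)]
    have he : ∀ x : Fin 4 → F,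
        eval x f₄ * ∏ i, (x i) ^ (Fintype.card F - 1 - (Fintype.card F - 2))
          = LPP4.G4 (x 0) (x 1) (x 2) (x 3) * (x 0 * x 1 * x 2 * x 3) := by
      intro x
      rw [heval x]
      congr 1
      rw [show Fintype.card F - 1 - (Fintype.card F - 2) = 1 by omega]
      rw [Fin.prod_univ_four]
      simp
    rw [Finset.sum_congr rfl fun x _ => he x,
      LPP4.sum4 (fun x => LPP4.G4 (x 0) (x 1) (x 2) (x 3) * (x 0 * x 1 * x 2 * x 3))]
    exact LPP4.bigsum hq5
  have hmem : DF ∈ f₄.support := by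
    rw [MvPolynomial.mem_support_iff, hcoeff]
    exact h4F
  have hDFsum : (DF.sum fun _ e => e) = 4 * (Fintype.card F - 2) := by
    rw [Finsupp.sum_fintype _ _ (fun i => rfl), Fin.sum_univ_four]
    simp only [hDF, Finsupp.coe_equivFunOnFinite_symm]
    omega
  have hlower : 4 * (Fintype.card F - 2) ≤ f₄.totalDegree := by
    rw [← hDFsum]
    exact MvPolynomial.le_totalDegree hmem
  -- upper bound
  have hupper : f₄.totalDegree ≤ 4 * (Fintype.card F - 2) := by
    rw [MvPolynomial.totalDegree]
    apply Finset.sup_le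
    intro m hm
    by_contra hgt
    push_neg at hgt
    have hmsum : (m.sum fun _ e => e) = m 0 + m 1 + m 2 + m 3 := by
      rw [Finsupp.sum_fintype _ _ (fun i => rfl), Fin.sum_univ_four]
    have hm0 : m 0 ≤ Fintype.card F - 1 := by
      have := (MvPolynomial.degreeOf_lt_iff (show 0 < Fintype.card F by omega)).mp
        (hred₄ 0) m hm
      omega
    have hm1 : m 1 ≤ Fintype.card F - 1 := by
      have := (MvPolynomial.degreeOf_lt_iff (show 0 < Fintype.card F by omega)).mp
        (hred₄ 1) m hm
      omega
    have hm2 : m 2 ≤ Fintype.card F - 1 := by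
      have := (MvPolynomial.degreeOf_lt_iff (show 0 < Fintype.card F by omega)).mp
        (hred₄ 2) m hm
      omega
    have hm3 : m 3 ≤ Fintype.card F - 1 := by
      have := (MvPolynomial.degreeOf_lt_iff (show 0 < Fintype.card F by omega)).mp
        (hred₄ 3) m hm
      omega
    have hms : 4 * (Fintype.card F - 2) < m 0 + m 1 + m 2 + m 3 := by omega
    have h1le : ∀ i : Fin 4, 1 ≤ m i := by
      intro i
      fin_cases i <;>
        first
          | (change 1 ≤ m 0; omega)
          | (change 1 ≤ m 1; omega)
          | (change 1 ≤ m 2; omega)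
          | (change 1 ≤ m 3; omega)
    have hmle' : ∀ i : Fin 4, m i ≤ Fintype.card F - 1 := by
      intro i
      fin_cases i <;>
        first
          | (change m 0 ≤ _; omega)
          | (change m 1 ≤ _; omega)
          | (change m 2 ≤ _; omega)
          | (change m 3 ≤ _; omega)
    have hMF : Finsupp.equivFunOnFinite.symm (fun i => m i) = m := by
      apply Finsupp.ext
      intro i
      simp
    have hco : f₄.coeff m
        = ∑ x : Fin 4 → F, eval x f₄ * ∏ i, (x i) ^ (Fintype.card F - 1 - m i) := by
      have := LPP4.coeff_formula hq5 f₄ hred₄ (fun i => m i) h1le hmle'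
      rw [hMF] at this
      exact this
    have he : ∀ x : Fin 4 → F,
        eval x f₄ * ∏ i, (x i) ^ (Fintype.card F - 1 - m i)
          = LPP4.G4 (x 0) (x 1) (x 2) (x 3)
            * ((x 0) ^ (Fintype.card F - 1 - m 0) * (x 1) ^ (Fintype.card F - 1 - m 1)
              * (x 2) ^ (Fintype.card F - 1 - m 2) * (x 3) ^ (Fintype.card F - 1 - m 3)) := by
      intro x
      rw [heval x, Fin.prod_univ_four]
    rw [Finset.sum_congr rfl fun x _ => he x] at hco
    rw [LPP4.sum4 (fun x => LPP4.G4 (x 0) (x 1) (x 2) (x 3)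
      * ((x 0) ^ (Fintype.card F - 1 - m 0) * (x 1) ^ (Fintype.card F - 1 - m 1)
        * (x 2) ^ (Fintype.card F - 1 - m 2) * (x 3) ^ (Fintype.card F - 1 - m 3)))] at hco
    have hzero : f₄.coeff m = 0 := by
      rw [hco]
      have hexists : m 0 = Fintype.card F - 1 ∨ m 1 = Fintype.card F - 1
          ∨ m 2 = Fintype.card F - 1 ∨ m 3 = Fintype.card F - 1 := by omega
      rcases hexists with h | h | h | h
      · rw [show Fintype.card F - 1 - m 0 = 0 by omega]
        exact LPP4.quadA hq5 _ _ _
      · rw [show Fintype.card F - 1 - m 1 = 0 by omega]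
        exact LPP4.quadB hq5 _ _ _
      · rw [show Fintype.card F - 1 - m 2 = 0 by omega]
        exact LPP4.quadC hq5 _ _ _
      · rw [show Fintype.card F - 1 - m 3 = 0 by omega]
        exact LPP4.quadD hq5 _ _ _
    exact (MvPolynomial.mem_support_iff.mp hm) hzero
  omega
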